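/- For probability measures μ, ν on ℝ with finite second moments, W₂²(μ,ν) = ∫₀¹ |F⁻¹(p) − G⁻¹(p)|² dp, where F⁻¹ and G⁻¹ are the quantile functions of μ and ν respectively. -/

import Mathlib

open MeasureTheory

open Set in
noncomputable def cfW (x s : ℝ) : ℝ :=
  (if s < x then (1:ℝ) else 0) - (if s < 0 then 1 else 0)

lemma cfW_measurable : Measurable (fun q : ℝ × ℝ => cfW q.1 q.2) := by
  unfold cfW
  apply Measurable.sub
  · exact Measurable.ite (measurableSet_lt measurable_snd measurable_fst)
      measurable_const measurable_const
  · exact Measurable.ite (measurableSet_lt measurable_snd measurable_const)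
      measurable_const measurable_const

lemma cfW_measurable1 (x : ℝ) : Measurable (cfW x) :=
  cfW_measurable.comp (measurable_const.prodMk measurable_id)

lemma cfW_eq_pos {x : ℝ} (hx : 0 ≤ x) : cfW x = (Set.Ico (0:ℝ) x).indicator 1 := by
  funext s
  simp only [cfW, Set.indicator_apply, Set.mem_Ico, Pi.one_apply]
  rcases lt_trichotomy s 0 with h | h | h
  · simp [h, h.trans_le hx, not_le.mpr h]
  · simp [h, hx]
  · have h1 : ¬ s < 0 := not_lt.mpr h.le
    by_cases h2 : s < x <;> simp [h1, h2, h.le]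

lemma cfW_eq_neg {x : ℝ} (hx : x < 0) : cfW x = fun s => -((Set.Ico x 0).indicator 1 s) := by
  funext s
  simp only [cfW, Set.indicator_apply, Set.mem_Ico, Pi.one_apply]
  rcases lt_trichotomy s x with h | h | h
  · simp [h, h.trans hx, not_le.mpr h]
  · simp [h, hx, le_refl]
  · have h1 : ¬ s < x := not_lt.mpr h.le
    simp only [h1, if_false, h.le, true_and]
    split <;> simp_all

lemma cfW_integrable (x : ℝ) : Integrable (cfW x) volume := by
  rcases le_or_gt 0 x with hx | hx
  · rw [cfW_eq_pos hx]
    rw [integrable_indicator_iff measurableSet_Ico]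
    exact (integrableOn_const_iff).mpr (Or.inr (by simp [Real.volume_Ico]))
  · rw [cfW_eq_neg hx]
    apply Integrable.neg
    rw [integrable_indicator_iff measurableSet_Ico]
    exact (integrableOn_const_iff).mpr (Or.inr (by simp [Real.volume_Ico]))

lemma indicator_one_eq (a b : ℝ) :
    (Set.Ico a b).indicator (1 : ℝ → ℝ) = (Set.Ico a b).indicator (fun _ => (1:ℝ)) := rfl

lemma integral_cfW (x : ℝ) : ∫ s, cfW x s = x := by
  rcases le_or_gt 0 x with hx | hx
  · rw [cfW_eq_pos hx, indicator_one_eq,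
      MeasureTheory.integral_indicator_const (1:ℝ) measurableSet_Ico]
    simp [Real.volume_Ico, hx]
  · rw [cfW_eq_neg hx]
    rw [integral_neg, indicator_one_eq,
      MeasureTheory.integral_indicator_const (1:ℝ) measurableSet_Ico]
    simp only [measureReal_def, Real.volume_Ico, smul_eq_mul, mul_one, sub_zero]
    rw [ENNReal.toReal_ofReal (by linarith)]
    ring

lemma integral_abs_cfW (x : ℝ) : ∫ s, |cfW x s| = |x| := by
  rcases le_or_gt 0 x with hx | hx
  · have h1 : (fun s => |cfW x s|) = cfW x := by
      funext s
      rw [cfW_eq_pos hx]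
      simp only [Set.indicator_apply, Pi.one_apply]
      split <;> simp
    rw [h1, integral_cfW, abs_of_nonneg hx]
  · have h1 : (fun s => |cfW x s|) = (Set.Ico x 0).indicator (fun _ => (1:ℝ)) := by
      funext s
      rw [cfW_eq_neg hx]
      simp only [Set.indicator_apply, Pi.one_apply, abs_neg]
      split <;> simp
    rw [h1, MeasureTheory.integral_indicator_const (1:ℝ) measurableSet_Ico]
    simp only [measureReal_def, Real.volume_Ico, smul_eq_mul, mul_one, sub_zero]
    rw [ENNReal.toReal_ofReal (by linarith), abs_of_neg hx]
    ring

section Quantile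

variable {μ : Measure ℝ} [IsProbabilityMeasure μ] {F Finv : ℝ → ℝ}

lemma F_cdf (hF : ∀ x, F x = (μ (Set.Iic x)).toReal) : F = ⇑(ProbabilityTheory.cdf μ) :=
  funext fun x => by rw [hF, ProbabilityTheory.cdf_eq_real, measureReal_def]

lemma F_mono (hF : ∀ x, F x = (μ (Set.Iic x)).toReal) : Monotone F := by
  rw [F_cdf hF]; exact ProbabilityTheory.monotone_cdf μ

lemma F_nonneg (hF : ∀ x, F x = (μ (Set.Iic x)).toReal) (x : ℝ) : 0 ≤ F x := by
  rw [hF]; exact ENNReal.toReal_nonneg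

lemma F_le_one (hF : ∀ x, F x = (μ (Set.Iic x)).toReal) (x : ℝ) : F x ≤ 1 := by
  rw [F_cdf hF]; exact ProbabilityTheory.cdf_le_one μ x

lemma q_nonempty (hF : ∀ x, F x = (μ (Set.Iic x)).toReal) {p : ℝ} (hp : p < 1) :
    {x : ℝ | p ≤ F x}.Nonempty := by
  rw [F_cdf hF]
  have h := (ProbabilityTheory.tendsto_cdf_atTop μ).eventually (eventually_gt_nhds hp)
  obtain ⟨x, hx⟩ := h.exists
  exact ⟨x, le_of_lt hx⟩

lemma q_bddBelow (hF : ∀ x, F x = (μ (Set.Iic x)).toReal) {p : ℝ} (hp : 0 < p) :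
    BddBelow {x : ℝ | p ≤ F x} := by
  have ht : Filter.Tendsto F Filter.atBot (nhds 0) := by
    rw [F_cdf hF]; exact ProbabilityTheory.tendsto_cdf_atBot μ
  have h := ht.eventually (eventually_lt_nhds hp)
  obtain ⟨x0, hx0⟩ := h.exists
  refine ⟨x0, fun y hy => ?_⟩
  by_contra hc
  push_neg at hc
  exact absurd (le_trans hy (F_mono hF hc.le)) (not_le.mpr hx0)

lemma q_le_F (hF : ∀ x, F x = (μ (Set.Iic x)).toReal)
    (hFinv : ∀ p, Finv p = sInf {x : ℝ | p ≤ F x}) {p : ℝ} (hp : p ∈ Set.Ioo (0:ℝ) 1) :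
    p ≤ F (Finv p) := by
  set S := {x : ℝ | p ≤ F x} with hS
  have hne : S.Nonempty := q_nonempty hF hp.2
  have hbd : BddBelow S := q_bddBelow hF hp.1
  set a := Finv p with ha
  have haS : a = sInf S := hFinv p
  -- p ≤ F (a + 1/(n+1)) for all n
  have key : ∀ n : ℕ, p ≤ F (a + 1/(n+1)) := by
    intro n
    have hpos : (0:ℝ) < 1/(n+1) := by positivity
    have : sInf S < a + 1/(n+1) := by rw [← haS]; linarith
    obtain ⟨y, hyS, hy⟩ := (csInf_lt_iff hbd hne).mp this
    exact le_trans hyS (F_mono hF hy.le)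
  -- right continuity
  have hrc : ContinuousWithinAt F (Set.Ici a) a := by
    rw [F_cdf hF]; exact (ProbabilityTheory.cdf μ).right_continuous a
  have hseq : Filter.Tendsto (fun n : ℕ => a + 1/(n+1)) Filter.atTop (nhdsWithin a (Set.Ici a)) := by
    rw [tendsto_nhdsWithin_iff]
    constructor
    · have : Filter.Tendsto (fun n : ℕ => 1/((n:ℝ)+1)) Filter.atTop (nhds 0) :=
        tendsto_one_div_add_atTop_nhds_zero_nat
      simpa using (tendsto_const_nhds.add this)
    · filter_upwards with n
      have : (0:ℝ) < 1/(n+1) := by positivity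
      exact Set.mem_Ici.mpr (by linarith)
  have hlim : Filter.Tendsto (fun n : ℕ => F (a + 1/(n+1))) Filter.atTop (nhds (F a)) :=
    hrc.tendsto.comp hseq
  exact ge_of_tendsto' hlim key

lemma q_galois (hF : ∀ x, F x = (μ (Set.Iic x)).toReal)
    (hFinv : ∀ p, Finv p = sInf {x : ℝ | p ≤ F x}) {p : ℝ} (hp : p ∈ Set.Ioo (0:ℝ) 1)
    (x : ℝ) : Finv p ≤ x ↔ p ≤ F x := by
  constructor
  · intro h
    exact le_trans (q_le_F hF hFinv hp) (F_mono hF h)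
  · intro h
    rw [hFinv]
    exact csInf_le (q_bddBelow hF hp.1) h

lemma q_lt_iff (hF : ∀ x, F x = (μ (Set.Iic x)).toReal)
    (hFinv : ∀ p, Finv p = sInf {x : ℝ | p ≤ F x}) {p : ℝ} (hp : p ∈ Set.Ioo (0:ℝ) 1)
    (s : ℝ) : s < Finv p ↔ F s < p := by
  rw [← not_le, ← not_le, q_galois hF hFinv hp]

lemma q_measurable (hF : ∀ x, F x = (μ (Set.Iic x)).toReal)
    (hFinv : ∀ p, Finv p = sInf {x : ℝ | p ≤ F x}) :
    Measurable ((Set.Ioo (0:ℝ) 1).piecewise Finv (fun _ => 0)) := by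
  apply measurable_of_Iic
  intro x
  have : ((Set.Ioo (0:ℝ) 1).piecewise Finv (fun _ => 0)) ⁻¹' (Set.Iic x) =
      (Set.Ioo (0:ℝ) 1 ∩ Set.Iic (F x)) ∪ ((Set.Ioo (0:ℝ) 1)ᶜ ∩ {p : ℝ | (0:ℝ) ≤ x}) := by
    ext p
    by_cases hp : p ∈ Set.Ioo (0:ℝ) 1
    · simp only [Set.mem_preimage, Set.mem_Iic, Set.piecewise_eq_of_mem _ _ _ hp,
        Set.mem_union, Set.mem_inter_iff, hp, true_and, Set.mem_compl_iff, not_true,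
        false_and, or_false]
      exact q_galois hF hFinv hp x
    · simp only [Set.mem_preimage, Set.mem_Iic, Set.piecewise_eq_of_notMem _ _ _ hp,
        Set.mem_union, Set.mem_inter_iff, hp, false_and, Set.mem_compl_iff, not_false_iff,
        true_and, false_or, Set.mem_setOf_eq]
  rw [this]
  refine (measurableSet_Ioo.inter measurableSet_Iic).union
    (measurableSet_Ioo.compl.inter ?_)
  by_cases h0 : (0:ℝ) ≤ x
  · simp only [h0, Set.setOf_true]; exact MeasurableSet.univ
  · simp only [h0, Set.setOf_false]; exact MeasurableSet.empty

lemma q_map (hF : ∀ x, F x = (μ (Set.Iic x)).toReal)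
    (hFinv : ∀ p, Finv p = sInf {x : ℝ | p ≤ F x}) :
    Measure.map ((Set.Ioo (0:ℝ) 1).piecewise Finv (fun _ => 0))
      (volume.restrict (Set.Ioo (0:ℝ) 1)) = μ := by
  set hq := (Set.Ioo (0:ℝ) 1).piecewise Finv (fun _ => 0) with hhq
  have hmeas : Measurable hq := q_measurable hF hFinv
  haveI : IsProbabilityMeasure (Measure.map hq (volume.restrict (Set.Ioo (0:ℝ) 1))) := by
    constructor
    rw [Measure.map_apply hmeas MeasurableSet.univ]
    simp [Real.volume_Ioo]
  refine MeasureTheory.Measure.ext_of_Iic _ μ (fun a => ?_)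
  rw [Measure.map_apply hmeas measurableSet_Iic,
    Measure.restrict_apply (hmeas measurableSet_Iic)]
  have hset : hq ⁻¹' (Set.Iic a) ∩ Set.Ioo 0 1 = Set.Iic (F a) ∩ Set.Ioo 0 1 := by
    ext p
    simp only [Set.mem_inter_iff, Set.mem_preimage, Set.mem_Iic, and_congr_left_iff]
    intro hp
    rw [hhq, Set.piecewise_eq_of_mem _ _ _ hp]
    exact q_galois hF hFinv hp a
  rw [hset]
  have h0 : 0 ≤ F a := F_nonneg hF a
  have h1 : F a ≤ 1 := F_le_one hF a
  have hvol : Set.Iic (F a) ∩ Set.Ioo (0:ℝ) 1 = if F a < 1 then Set.Ioc 0 (F a) else Set.Ioo 0 1 := by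
    split_ifs with hc
    · ext p
      simp only [Set.mem_inter_iff, Set.mem_Iic, Set.mem_Ioo, Set.mem_Ioc]
      constructor
      · rintro ⟨h1', h2', _⟩; exact ⟨h2', h1'⟩
      · rintro ⟨h1', h2'⟩; exact ⟨h2', h1', lt_of_le_of_lt h2' hc⟩
    · push_neg at hc
      have : F a = 1 := le_antisymm h1 hc
      ext p
      simp only [Set.mem_inter_iff, Set.mem_Iic, Set.mem_Ioo, this]
      constructor
      · rintro ⟨_, h⟩; exact h
      · rintro h; exact ⟨h.2.le, h⟩
  rw [hvol]
  split_ifs with hc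
  · rw [Real.volume_Ioc, hF, sub_zero, ENNReal.ofReal_toReal (measure_ne_top μ _)]
  · push_neg at hc
    have heq : F a = 1 := le_antisymm h1 hc
    rw [Real.volume_Ioo]
    have : μ (Set.Iic a) = 1 := by
      have := hF a
      rw [heq] at this
      have hfin := measure_ne_top μ (Set.Iic a)
      rw [← ENNReal.ofReal_toReal hfin, ← this]
      simp
    rw [this]; norm_num

end Quantile

section Coupling

lemma coupling_integrable {μ ν : Measure ℝ} [IsProbabilityMeasure μ] [IsProbabilityMeasure ν]
    (hμ : Integrable (fun x => x ^ 2) μ) (hν : Integrable (fun x => x ^ 2) ν)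
    (π : Measure (ℝ × ℝ)) [IsProbabilityMeasure π] (hfst : π.fst = μ) (hsnd : π.snd = ν) :
    Integrable (fun p : ℝ × ℝ => p.1 ^ 2) π ∧ Integrable (fun p : ℝ × ℝ => p.2 ^ 2) π ∧
    Integrable (fun p : ℝ × ℝ => |p.1| * |p.2|) π ∧ Integrable (fun p : ℝ × ℝ => p.1 * p.2) π ∧
    Integrable (fun p : ℝ × ℝ => |p.1 - p.2| ^ 2) π := by
  have hμ' : μ = π.map Prod.fst := by rw [← hfst]; rfl
  have hν' : ν = π.map Prod.snd := by rw [← hsnd]; rfl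
  have h1 : Integrable (fun p : ℝ × ℝ => p.1 ^ 2) π := by
    rw [hμ'] at hμ
    exact (integrable_map_measure (by fun_prop) measurable_fst.aemeasurable).mp hμ
  have h2 : Integrable (fun p : ℝ × ℝ => p.2 ^ 2) π := by
    rw [hν'] at hν
    exact (integrable_map_measure (by fun_prop) measurable_snd.aemeasurable).mp hν
  have hsum : Integrable (fun p : ℝ × ℝ => p.1 ^ 2 + p.2 ^ 2) π := h1.add h2
  have h3 : Integrable (fun p : ℝ × ℝ => |p.1| * |p.2|) π := by
    refine hsum.mono ((measurable_fst.abs.mul measurable_snd.abs).aestronglyMeasurable) ?_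
    filter_upwards with p
    simp only [norm_mul, norm_abs_eq_norm, Real.norm_eq_abs]
    have := sq_nonneg (|p.1| - |p.2|)
    have h4 : |p.1 ^ 2 + p.2 ^ 2| = p.1 ^ 2 + p.2 ^ 2 := abs_of_nonneg (by positivity)
    rw [h4]
    nlinarith [abs_nonneg p.1, abs_nonneg p.2, sq_abs p.1, sq_abs p.2]
  have h4 : Integrable (fun p : ℝ × ℝ => p.1 * p.2) π := by
    refine h3.mono (by fun_prop) ?_
    filter_upwards with p
    simp [Real.norm_eq_abs, abs_mul, abs_of_nonneg (mul_nonneg (abs_nonneg p.1) (abs_nonneg p.2))]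
  have hsum2 : Integrable (fun p : ℝ × ℝ => (p.1 ^ 2 + p.2 ^ 2) + (p.1 ^ 2 + p.2 ^ 2)) π :=
    hsum.add hsum
  have h5 : Integrable (fun p : ℝ × ℝ => |p.1 - p.2| ^ 2) π := by
    refine hsum2.mono (((measurable_fst.sub measurable_snd).abs.pow_const 2).aestronglyMeasurable) ?_
    filter_upwards with p
    simp only [Real.norm_eq_abs]
    rw [abs_of_nonneg (by positivity : (0:ℝ) ≤ |p.1 - p.2| ^ 2),
      abs_of_nonneg (by positivity : (0:ℝ) ≤ p.1 ^ 2 + p.2 ^ 2 + (p.1 ^ 2 + p.2 ^ 2)), sq_abs]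
    nlinarith [sq_nonneg (p.1 + p.2)]
  exact ⟨h1, h2, h3, h4, h5⟩

lemma integral_marginal_fst {μ : Measure ℝ} (π : Measure (ℝ × ℝ)) (hfst : π.fst = μ) :
    ∫ p, (p.1 : ℝ) ^ 2 ∂π = ∫ x, x ^ 2 ∂μ := by
  have hμ' : μ = π.map Prod.fst := by rw [← hfst]; rfl
  rw [hμ', integral_map measurable_fst.aemeasurable (by fun_prop)]

lemma integral_marginal_snd {ν : Measure ℝ} (π : Measure (ℝ × ℝ)) (hsnd : π.snd = ν) :
    ∫ p, (p.2 : ℝ) ^ 2 ∂π = ∫ x, x ^ 2 ∂ν := by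
  have hν' : ν = π.map Prod.snd := by rw [← hsnd]; rfl
  rw [hν', integral_map measurable_snd.aemeasurable (by fun_prop)]

lemma cost_expand {μ ν : Measure ℝ} [IsProbabilityMeasure μ] [IsProbabilityMeasure ν]
    (hμ : Integrable (fun x => x ^ 2) μ) (hν : Integrable (fun x => x ^ 2) ν)
    (π : Measure (ℝ × ℝ)) [IsProbabilityMeasure π] (hfst : π.fst = μ) (hsnd : π.snd = ν) :
    ∫ p, |p.1 - p.2| ^ 2 ∂π
      = (∫ x, x ^ 2 ∂μ) + (∫ x, x ^ 2 ∂ν) - 2 * ∫ p, p.1 * p.2 ∂π := by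
  obtain ⟨h1, h2, _, h4, _⟩ := coupling_integrable hμ hν π hfst hsnd
  have hpt : ∀ p : ℝ × ℝ, |p.1 - p.2| ^ 2 = p.1 ^ 2 + p.2 ^ 2 - 2 * (p.1 * p.2) := by
    intro p; rw [sq_abs]; ring
  rw [integral_congr_ae (Filter.Eventually.of_forall hpt)]
  have hsum' : Integrable (fun p : ℝ × ℝ => p.1 ^ 2 + p.2 ^ 2) π := h1.add h2
  have h4' : Integrable (fun p : ℝ × ℝ => 2 * (p.1 * p.2)) π := h4.const_mul 2
  rw [integral_sub hsum' h4', integral_add h1 h2,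
    integral_const_mul, integral_marginal_fst π hfst, integral_marginal_snd π hsnd]

lemma inner_eq (π : Measure (ℝ × ℝ)) [IsProbabilityMeasure π] (s t : ℝ) :
    ∫ p, cfW p.1 s * cfW p.2 t ∂π
      = (π (Set.Ioi s ×ˢ Set.Ioi t)).toReal
        - (if t < 0 then (1:ℝ) else 0) * (π.fst (Set.Ioi s)).toReal
        - (if s < 0 then (1:ℝ) else 0) * (π.snd (Set.Ioi t)).toReal
        + (if s < 0 then (1:ℝ) else 0) * (if t < 0 then (1:ℝ) else 0) := by
  set a : ℝ := if s < 0 then 1 else 0 with ha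
  set b : ℝ := if t < 0 then 1 else 0 with hb
  set A : Set (ℝ × ℝ) := Prod.fst ⁻¹' Set.Ioi s with hA
  set B : Set (ℝ × ℝ) := Prod.snd ⁻¹' Set.Ioi t with hB
  have hAm : MeasurableSet A := measurable_fst measurableSet_Ioi
  have hBm : MeasurableSet B := measurable_snd measurableSet_Ioi
  have hpt : ∀ p : ℝ × ℝ, cfW p.1 s * cfW p.2 t
      = (A ∩ B).indicator (fun _ => (1:ℝ)) p - b * A.indicator (fun _ => (1:ℝ)) p
        - a * B.indicator (fun _ => (1:ℝ)) p + a * b := by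
    intro p
    simp only [cfW, Set.indicator_apply, Set.mem_inter_iff, hA, hB, Set.mem_preimage,
      Set.mem_Ioi, ha, hb]
    by_cases h1 : s < p.1 <;> by_cases h2 : t < p.2 <;> by_cases h3 : s < 0 <;>
      by_cases h4 : t < 0 <;> simp [h1, h2, h3, h4] <;> ring
  have hIA : Integrable (A.indicator fun _ => (1:ℝ)) π := (integrable_const 1).indicator hAm
  have hIB : Integrable (B.indicator fun _ => (1:ℝ)) π := (integrable_const 1).indicator hBm
  have hIAB : Integrable ((A ∩ B).indicator fun _ => (1:ℝ)) π :=
    (integrable_const 1).indicator (hAm.inter hBm)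
  rw [integral_congr_ae (Filter.Eventually.of_forall hpt)]
  have i2 : Integrable (fun p : ℝ × ℝ => b * A.indicator (fun _ => (1:ℝ)) p) π := hIA.const_mul b
  have i3 : Integrable (fun p : ℝ × ℝ => a * B.indicator (fun _ => (1:ℝ)) p) π := hIB.const_mul a
  have i4 : Integrable (fun p : ℝ × ℝ => (A ∩ B).indicator (fun _ => (1:ℝ)) p) π := hIAB
  have i5 : Integrable (fun p : ℝ × ℝ =>
      (A ∩ B).indicator (fun _ => (1:ℝ)) p - b * A.indicator (fun _ => (1:ℝ)) p) π := i4.sub i2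
  have i6 : Integrable (fun p : ℝ × ℝ =>
      (A ∩ B).indicator (fun _ => (1:ℝ)) p - b * A.indicator (fun _ => (1:ℝ)) p
        - a * B.indicator (fun _ => (1:ℝ)) p) π := i5.sub i3
  rw [integral_add i6 (integrable_const (a * b)),
    integral_sub i5 i3,
    integral_sub i4 i2, integral_const_mul, integral_const_mul,
    MeasureTheory.integral_indicator_const (1:ℝ) (hAm.inter hBm),
    MeasureTheory.integral_indicator_const (1:ℝ) hAm,
    MeasureTheory.integral_indicator_const (1:ℝ) hBm, integral_const]
  have hAB : A ∩ B = Set.Ioi s ×ˢ Set.Ioi t := (Set.prod_eq _ _).symm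
  rw [hAB, Measure.fst_apply measurableSet_Ioi, Measure.snd_apply measurableSet_Ioi]
  simp [measure_univ, measureReal_def, hA, hB]

end Coupling

section Master

lemma master_fubini (π : Measure (ℝ × ℝ)) [IsProbabilityMeasure π]
    (h2 : Integrable (fun p : ℝ × ℝ => |p.1| * |p.2|) π) :
    Integrable (fun z : ℝ × ℝ => ∫ p, cfW p.1 z.1 * cfW p.2 z.2 ∂π) (volume.prod volume) ∧
    ∫ p, p.1 * p.2 ∂π
      = ∫ z, (∫ p, cfW p.1 z.1 * cfW p.2 z.2 ∂π) ∂(volume.prod volume) := by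
  set f : (ℝ × ℝ) → (ℝ × ℝ) → ℝ := fun p z => cfW p.1 z.1 * cfW p.2 z.2 with hf
  have hmeas : Measurable (Function.uncurry f) := by
    have m1 : Measurable (fun q : (ℝ × ℝ) × (ℝ × ℝ) => cfW q.1.1 q.2.1) :=
      cfW_measurable.comp ((measurable_fst.fst).prodMk (measurable_snd.fst))
    have m2 : Measurable (fun q : (ℝ × ℝ) × (ℝ × ℝ) => cfW q.1.2 q.2.2) :=
      cfW_measurable.comp ((measurable_fst.snd).prodMk (measurable_snd.snd))
    exact m1.mul m2
  have hnorm : ∀ p : ℝ × ℝ,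
      ∫ z, ‖f p z‖ ∂(volume.prod volume) = |p.1| * |p.2| := by
    intro p
    have : ∀ z : ℝ × ℝ, ‖f p z‖ = |cfW p.1 z.1| * |cfW p.2 z.2| := by
      intro z; rw [hf]; simp [Real.norm_eq_abs, abs_mul]
    rw [integral_congr_ae (Filter.Eventually.of_forall this),
      MeasureTheory.integral_prod_mul (fun s => |cfW p.1 s|) (fun s => |cfW p.2 s|),
      integral_abs_cfW, integral_abs_cfW]
  have hint : Integrable (Function.uncurry f) (π.prod (volume.prod volume)) := by
    rw [MeasureTheory.integrable_prod_iff hmeas.aestronglyMeasurable]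
    constructor
    · filter_upwards with p
      exact Integrable.mul_prod (cfW_integrable p.1) (cfW_integrable p.2)
    · refine h2.congr ?_
      filter_upwards with p
      exact (hnorm p).symm
  constructor
  · exact hint.integral_prod_right
  · have hswap := MeasureTheory.integral_integral_swap hint
    have hin : ∀ p : ℝ × ℝ, ∫ z, f p z ∂(volume.prod volume) = p.1 * p.2 := by
      intro p
      rw [hf]
      rw [MeasureTheory.integral_prod_mul (cfW p.1) (cfW p.2), integral_cfW, integral_cfW]
    calc ∫ p, p.1 * p.2 ∂π
        = ∫ p, (∫ z, f p z ∂(volume.prod volume)) ∂π := by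
          refine integral_congr_ae ?_
          filter_upwards with p
          exact (hin p).symm
      _ = ∫ z, (∫ p, f p z ∂π) ∂(volume.prod volume) := hswap

end Master

section Compare

lemma xy_integral_le {μ ν : Measure ℝ} [IsProbabilityMeasure μ] [IsProbabilityMeasure ν]
    (hμ : Integrable (fun x => x ^ 2) μ) (hν : Integrable (fun x => x ^ 2) ν)
    (π π₀ : Measure (ℝ × ℝ)) [IsProbabilityMeasure π] [IsProbabilityMeasure π₀]
    (hfst : π.fst = μ) (hsnd : π.snd = ν) (hfst₀ : π₀.fst = μ) (hsnd₀ : π₀.snd = ν)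
    (hcmp : ∀ s t : ℝ, π (Set.Ioi s ×ˢ Set.Ioi t) ≤ π₀ (Set.Ioi s ×ˢ Set.Ioi t)) :
    ∫ p, p.1 * p.2 ∂π ≤ ∫ p, p.1 * p.2 ∂π₀ := by
  obtain ⟨_, _, h3, _, _⟩ := coupling_integrable hμ hν π hfst hsnd
  obtain ⟨_, _, h3₀, _, _⟩ := coupling_integrable hμ hν π₀ hfst₀ hsnd₀
  obtain ⟨hi, he⟩ := master_fubini π h3
  obtain ⟨hi₀, he₀⟩ := master_fubini π₀ h3₀
  rw [he, he₀]
  refine integral_mono hi hi₀ ?_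
  intro z
  have e1 := inner_eq π z.1 z.2
  have e2 := inner_eq π₀ z.1 z.2
  simp only [hfst, hsnd, hfst₀, hsnd₀] at e1 e2
  simp only []
  rw [e1, e2]
  have hle : (π (Set.Ioi z.1 ×ˢ Set.Ioi z.2)).toReal ≤ (π₀ (Set.Ioi z.1 ×ˢ Set.Ioi z.2)).toReal :=
    ENNReal.toReal_mono (measure_ne_top π₀ _) (hcmp z.1 z.2)
  linarith

end Compare

/-- Kantorovich formulation of squared `W₂` on `ℝ`. -/
noncomputable def W2sq (μ ν : Measure ℝ) : ℝ :=
  sInf {C : ℝ | ∃ π : Measure (ℝ × ℝ),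
    IsProbabilityMeasure π ∧ π.fst = μ ∧ π.snd = ν ∧
    C = ∫ p, |p.1 - p.2| ^ 2 ∂π}

/-- Explicit 1D formula: `W₂²(μ,ν) = ∫₀¹ |F⁻¹(p) − G⁻¹(p)|² dp` in terms of quantile functions. -/
theorem W2sq_quantile_formula (μ ν : Measure ℝ)
    [IsProbabilityMeasure μ] [IsProbabilityMeasure ν]
    (hμ : Integrable (fun x => x ^ 2) μ) (hν : Integrable (fun x => x ^ 2) ν)
    (F G Finv Ginv : ℝ → ℝ)
    (hF : ∀ x, F x = (μ (Set.Iic x)).toReal)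
    (hG : ∀ x, G x = (ν (Set.Iic x)).toReal)
    (hFinv : ∀ p, Finv p = sInf {x : ℝ | p ≤ F x})
    (hGinv : ∀ p, Ginv p = sInf {x : ℝ | p ≤ G x}) :
    W2sq μ ν = ∫ p in Set.Ioo (0 : ℝ) 1, |Finv p - Ginv p| ^ 2 := by
  classical
  set η := volume.restrict (Set.Ioo (0:ℝ) 1) with hη
  haveI hηp : IsProbabilityMeasure η := by
    constructor
    rw [hη, Measure.restrict_apply_univ]
    simp [Real.volume_Ioo]
  set hq := (Set.Ioo (0:ℝ) 1).piecewise Finv (fun _ => 0) with hhq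
  set gq := (Set.Ioo (0:ℝ) 1).piecewise Ginv (fun _ => 0) with hgq
  have hqm : Measurable hq := q_measurable hF hFinv
  have gqm : Measurable gq := q_measurable hG hGinv
  set T : ℝ → ℝ × ℝ := fun p => (hq p, gq p) with hT
  have hTm : Measurable T := hqm.prodMk gqm
  set π₀ : Measure (ℝ × ℝ) := Measure.map T η with hπ₀
  haveI hπ₀p : IsProbabilityMeasure π₀ := Measure.isProbabilityMeasure_map hTm.aemeasurable
  have hfst₀ : π₀.fst = μ := by
    rw [hπ₀, hT, Measure.fst_map_prodMk gqm]
    exact q_map hF hFinv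
  have hsnd₀ : π₀.snd = ν := by
    rw [hπ₀, hT, Measure.snd_map_prodMk hqm]
    exact q_map hG hGinv
  -- cost of the comonotone coupling
  have hcost₀ : ∫ p, |p.1 - p.2| ^ 2 ∂π₀ = ∫ p in Set.Ioo (0:ℝ) 1, |Finv p - Ginv p| ^ 2 := by
    rw [hπ₀, integral_map hTm.aemeasurable (f := fun p : ℝ × ℝ => |p.1 - p.2| ^ 2)
      (((measurable_fst.sub measurable_snd).abs.pow_const 2).aestronglyMeasurable)]
    rw [hη]
    refine MeasureTheory.setIntegral_congr_fun measurableSet_Ioo ?_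
    intro p hp
    simp only [hT, hhq, hgq, Set.piecewise_eq_of_mem _ _ _ hp]
  -- value of π₀ on upper-right quadrants
  have hμIoi : ∀ s, μ (Set.Ioi s) = ENNReal.ofReal (1 - F s) := by
    intro s
    rw [← Set.compl_Iic, measure_compl measurableSet_Iic (measure_ne_top μ _), measure_univ]
    have h1 : μ (Set.Iic s) = ENNReal.ofReal (F s) := by
      rw [hF]; exact (ENNReal.ofReal_toReal (measure_ne_top μ _)).symm
    rw [h1, ← ENNReal.ofReal_one, ← ENNReal.ofReal_sub _ (F_nonneg hF s)]
  have hνIoi : ∀ t, ν (Set.Ioi t) = ENNReal.ofReal (1 - G t) := by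
    intro t
    rw [← Set.compl_Iic, measure_compl measurableSet_Iic (measure_ne_top ν _), measure_univ]
    have h1 : ν (Set.Iic t) = ENNReal.ofReal (G t) := by
      rw [hG]; exact (ENNReal.ofReal_toReal (measure_ne_top ν _)).symm
    rw [h1, ← ENNReal.ofReal_one, ← ENNReal.ofReal_sub _ (F_nonneg hG t)]
  have hval : ∀ s t : ℝ, π₀ (Set.Ioi s ×ˢ Set.Ioi t) = ENNReal.ofReal (1 - max (F s) (G t)) := by
    intro s t
    have hms : MeasurableSet (Set.Ioi s ×ˢ Set.Ioi t) := measurableSet_Ioi.prod measurableSet_Ioi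
    rw [hπ₀, Measure.map_apply hTm hms, hη, Measure.restrict_apply (hTm hms)]
    have hset : T ⁻¹' (Set.Ioi s ×ˢ Set.Ioi t) ∩ Set.Ioo 0 1
        = Set.Ioo (max (F s) (G t)) 1 := by
      ext p
      simp only [Set.mem_inter_iff, Set.mem_preimage, Set.mem_prod, Set.mem_Ioi, Set.mem_Ioo, hT]
      constructor
      · rintro ⟨⟨h1, h2⟩, hp⟩
        have hp' : p ∈ Set.Ioo (0:ℝ) 1 := hp
        have e1 : hq p = Finv p := by rw [hhq]; exact Set.piecewise_eq_of_mem _ _ _ hp'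
        have e2 : gq p = Ginv p := by rw [hgq]; exact Set.piecewise_eq_of_mem _ _ _ hp'
        have h1' : s < Finv p := by rwa [e1] at h1
        have h2' : t < Ginv p := by rwa [e2] at h2
        exact ⟨max_lt ((q_lt_iff hF hFinv hp' s).mp h1') ((q_lt_iff hG hGinv hp' t).mp h2'), hp.2⟩
      · rintro ⟨h1, h2⟩
        have hp : p ∈ Set.Ioo (0:ℝ) 1 :=
          ⟨lt_of_le_of_lt (le_trans (F_nonneg hF s) (le_max_left _ _)) h1, h2⟩
        have e1 : hq p = Finv p := by rw [hhq]; exact Set.piecewise_eq_of_mem _ _ _ hp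
        have e2 : gq p = Ginv p := by rw [hgq]; exact Set.piecewise_eq_of_mem _ _ _ hp
        refine ⟨⟨?_, ?_⟩, hp⟩
        · rw [e1]
          exact (q_lt_iff hF hFinv hp s).mpr (lt_of_le_of_lt (le_max_left _ _) h1)
        · rw [e2]
          exact (q_lt_iff hG hGinv hp t).mpr (lt_of_le_of_lt (le_max_right _ _) h1)
    rw [hset, Real.volume_Ioo]
  -- any coupling is dominated by π₀ on quadrants
  have hcmp : ∀ (π' : Measure (ℝ × ℝ)), IsProbabilityMeasure π' → π'.fst = μ → π'.snd = ν →
      ∀ s t : ℝ, π' (Set.Ioi s ×ˢ Set.Ioi t) ≤ π₀ (Set.Ioi s ×ˢ Set.Ioi t) := by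
    intro π' hp' hfst' hsnd' s t
    rw [hval s t]
    rcases max_cases (F s) (G t) with ⟨hm, _⟩ | ⟨hm, _⟩
    · rw [hm]
      calc π' (Set.Ioi s ×ˢ Set.Ioi t) ≤ π' (Prod.fst ⁻¹' Set.Ioi s) :=
            measure_mono (fun p hp => hp.1)
        _ = μ (Set.Ioi s) := by rw [← hfst', Measure.fst_apply measurableSet_Ioi]
        _ = ENNReal.ofReal (1 - F s) := hμIoi s
    · rw [hm]
      calc π' (Set.Ioi s ×ˢ Set.Ioi t) ≤ π' (Prod.snd ⁻¹' Set.Ioi t) :=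
            measure_mono (fun p hp => hp.2)
        _ = ν (Set.Ioi t) := by rw [← hsnd', Measure.snd_apply measurableSet_Ioi]
        _ = ENNReal.ofReal (1 - G t) := hνIoi t
  -- assemble
  set r := ∫ p in Set.Ioo (0:ℝ) 1, |Finv p - Ginv p| ^ 2 with hr
  have hmem : r ∈ {C : ℝ | ∃ π : Measure (ℝ × ℝ),
      IsProbabilityMeasure π ∧ π.fst = μ ∧ π.snd = ν ∧ C = ∫ p, |p.1 - p.2| ^ 2 ∂π} :=
    ⟨π₀, hπ₀p, hfst₀, hsnd₀, hcost₀.symm⟩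
  have hlb : ∀ C ∈ {C : ℝ | ∃ π : Measure (ℝ × ℝ),
      IsProbabilityMeasure π ∧ π.fst = μ ∧ π.snd = ν ∧ C = ∫ p, |p.1 - p.2| ^ 2 ∂π}, r ≤ C := by
    rintro C ⟨π', hp', hfst', hsnd', rfl⟩
    haveI := hp'
    have hxy : ∫ p, p.1 * p.2 ∂π' ≤ ∫ p, p.1 * p.2 ∂π₀ :=
      xy_integral_le hμ hν π' π₀ hfst' hsnd' hfst₀ hsnd₀ (hcmp π' hp' hfst' hsnd')
    have hc1 := cost_expand hμ hν π' hfst' hsnd'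
    have hc2 := cost_expand hμ hν π₀ hfst₀ hsnd₀
    linarith [hxy, hc1, hc2, hcost₀]
  rw [W2sq]
  exact le_antisymm (csInf_le ⟨r, fun C hC => hlb C hC⟩ hmem) (le_csInf ⟨r, hmem⟩ hlb)
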